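/- Let α > 0 and λ, θ̄, σ̄ ∈ ℝ, and define H(r,t) := A₁(t)·e^{B₁(t)·r} on ℝ × [0,T]. Then H is C^{2,1}, H(r,t) < 0, H(r,T) = -1, H_r(r,t)/H(r,t) = B₁(t), and H solves the semilinear PDE H_t + r·H + (θ̄ - α·r - σ̄·λ)·H_r + (1/2)·σ̄²·H_rr - σ̄²·H_r²/H = 0 for all (r,t) ∈ ℝ × [0,T]. -/

import Mathlib

/- STATEMENT 15: In the Vasicek model, H(r,t) := A₁(t)e^{B₁(t)r} is C^{2,1}, negative,
satisfies H(r,T) = -1 and H_r/H = B₁(t), and solves the semilinear PDE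
H_t + rH + (θ̄ - αr - σ̄λ)H_r + ½σ̄²H_rr - σ̄²H_r²/H = 0 on ℝ × [0,T]. -/
theorem stmt_15
    (T : ℝ) (hT : 0 < T)
    (α lam θ σb : ℝ) (hα : 0 < α)
    (B1 A1 : ℝ → ℝ)
    (hB1 : ∀ t : ℝ, B1 t = (1 / α) * (1 - Real.exp (-(α * (T - t)))))
    (hA1 : ∀ t : ℝ, A1 t =
      -Real.exp (∫ s in t..T, ((θ - σb * lam) * B1 s - (1 / 2) * σb ^ 2 * (B1 s) ^ 2)))
    (H : ℝ → ℝ → ℝ)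
    (hH : ∀ r t : ℝ, H r t = A1 t * Real.exp (B1 t * r)) :
    (∀ t : ℝ, ContDiff ℝ 2 fun p => H p t) ∧
    (∀ r : ℝ, Differentiable ℝ fun s => H r s) ∧
    (∀ r : ℝ, ∀ t ∈ Set.Icc (0 : ℝ) T, H r t < 0) ∧
    (∀ r : ℝ, H r T = -1) ∧
    (∀ r : ℝ, ∀ t ∈ Set.Icc (0 : ℝ) T, deriv (fun p => H p t) r / H r t = B1 t) ∧
    (∀ r : ℝ, ∀ t ∈ Set.Icc (0 : ℝ) T,
      deriv (fun s => H r s) t + r * H r t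
        + (θ - α * r - σb * lam) * deriv (fun p => H p t) r
        + (1 / 2) * σb ^ 2 * deriv (fun p => deriv (fun q => H q t) p) r
        - σb ^ 2 * (deriv (fun p => H p t) r) ^ 2 / H r t = 0) := by
  have hαne : α ≠ 0 := hα.ne'
  have hB1f : B1 = fun t => (1 / α) * (1 - Real.exp (-(α * (T - t)))) := funext hB1
  set f : ℝ → ℝ := fun s => (θ - σb * lam) * B1 s - (1 / 2) * σb ^ 2 * (B1 s) ^ 2 with hfdef
  have hB1c : Continuous B1 := by rw [hB1f]; fun_prop
  have hfc : Continuous f := by rw [hfdef]; fun_prop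
  set F : ℝ → ℝ := fun t => ∫ s in t..T, f s with hFdef
  have hA1' : ∀ t, A1 t = -Real.exp (F t) := hA1
  have hA1f : A1 = fun t => -Real.exp (F t) := funext hA1'
  have hHneg : ∀ r t : ℝ, H r t < 0 := by
    intro r t
    rw [hH, hA1']
    have := Real.exp_pos (F t)
    have := Real.exp_pos (B1 t * r)
    nlinarith
  have hHne : ∀ r t : ℝ, H r t ≠ 0 := fun r t => (hHneg r t).ne
  -- derivative of B1
  have hBd : ∀ t : ℝ, HasDerivAt B1 (α * B1 t - 1) t := by
    intro t
    have h1 : HasDerivAt (fun s : ℝ => -(α * (T - s))) (-(α * (-1))) t :=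
      (((hasDerivAt_id t).const_sub T).const_mul α).neg
    have h2 := ((h1.exp.const_sub 1).const_mul (1 / α))
    rw [hB1f]
    refine h2.congr_deriv ?_
    beta_reduce
    field_simp
    ring
  -- derivative of F
  have hFd : ∀ t : ℝ, HasDerivAt F (-(f t)) t := by
    intro t
    exact intervalIntegral.integral_hasDerivAt_left (hfc.intervalIntegrable t T)
      (hfc.stronglyMeasurableAtFilter _ _) hfc.continuousAt
  -- derivative of A1
  have hAd : ∀ t : ℝ, HasDerivAt A1 (A1 t * (-(f t))) t := by
    intro t
    have := ((hFd t).exp).neg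
    rw [hA1f]
    refine this.congr_deriv ?_
    beta_reduce
    ring
  -- derivative in r
  have hDr : ∀ t r : ℝ, HasDerivAt (fun p => H p t) (H r t * B1 t) r := by
    intro t r
    have h1 := (((hasDerivAt_id r).const_mul (B1 t)).exp.const_mul (A1 t) :
      HasDerivAt _ _ r)
    simp only [id_eq, mul_one] at h1
    have he : (fun p => H p t) = fun p : ℝ => A1 t * Real.exp (B1 t * p) := by
      funext p; rw [hH]
    rw [he, hH]
    refine h1.congr_deriv ?_
    ring
  have hderivr : ∀ t r : ℝ, deriv (fun p => H p t) r = H r t * B1 t :=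
    fun t r => (hDr t r).deriv
  -- second derivative in r
  have hderivrr : ∀ t r : ℝ,
      deriv (fun p => deriv (fun q => H q t) p) r = H r t * B1 t * B1 t := by
    intro t r
    have he : (fun p => deriv (fun q => H q t) p) = fun p => H p t * B1 t := by
      funext p; exact hderivr t p
    rw [he]
    exact ((hDr t r).mul_const (B1 t)).deriv
  -- derivative in t
  have hDt : ∀ r t : ℝ, HasDerivAt (fun s => H r s)
      (A1 t * (-(f t)) * Real.exp (B1 t * r)
        + A1 t * (Real.exp (B1 t * r) * ((α * B1 t - 1) * r))) t := by
    intro r t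
    have h1 := (hAd t).mul (((hBd t).mul_const r).exp)
    have he : (fun s => H r s) = fun s => A1 s * Real.exp (B1 s * r) := by
      funext s; rw [hH]
    rw [he]
    exact h1
  refine ⟨?_, ?_, fun r t _ => hHneg r t, ?_, ?_, ?_⟩
  · intro t
    have he : (fun p => H p t) = fun p : ℝ => A1 t * Real.exp (B1 t * p) := by
      funext p; rw [hH]
    rw [he]; fun_prop
  · intro r t
    exact (hDt r t).differentiableAt
  · intro r
    have hB1T : B1 T = 0 := by rw [hB1]; simp
    have hFT : F T = 0 := by simp [hFdef]
    rw [hH, hA1', hB1T, hFT]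
    simp
  · intro r t _
    rw [hderivr t r, mul_comm, mul_div_assoc, div_self (hHne r t), mul_one]
  · intro r t _
    rw [(hDt r t).deriv, hderivr t r, hderivrr t r, hH r t]
    have hE : Real.exp (B1 t * r) ≠ 0 := (Real.exp_pos _).ne'
    have hA : A1 t ≠ 0 := by
      intro h
      exact hHne r t (by rw [hH, h, zero_mul])
    have hft : f t = (θ - σb * lam) * B1 t - (1 / 2) * σb ^ 2 * (B1 t) ^ 2 := rfl
    field_simp
    ring
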